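/- For all λ ≥ 0 and all u ∈ ℝ and n ≥ 1, log 𝔼(e^{λX₁}) ≥ λu + (1/n) log ℙ(X̄ₙ ≥ u), where X̄ₙ = (X₁+⋯+Xₙ)/n. -/

import Mathlib

open MeasureTheory ProbabilityTheory Filter Topology

/-- Empirical mean of the first `n` variables. -/
noncomputable def empMean {Ω : Type*} (X : ℕ → Ω → ℝ) (n : ℕ) (ω : Ω) : ℝ :=
  (∑ i ∈ Finset.range n, X i ω) / n

/-- The entropy `s(x) = sup_{n ≥ 1} (1/n) log ℙ(X̄ₙ ≥ x)`, with values in `[-∞, 0]`. -/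
noncomputable def entropy {Ω : Type*} [MeasurableSpace Ω] (μ : Measure Ω)
    (X : ℕ → Ω → ℝ) (x : ℝ) : EReal :=
  ⨆ n : ℕ, ⨆ _ : 1 ≤ n, (((n : ℝ)⁻¹ : ℝ) : EReal) *
    ENNReal.log (μ {ω | x ≤ empMean X n ω})

/-- The pressure `p(λ) = log 𝔼(e^{λ X₁})`, with values in `(-∞, ∞]`. -/
noncomputable def pressure {Ω : Type*} [MeasurableSpace Ω] (μ : Measure Ω)
    (X : ℕ → Ω → ℝ) (l : ℝ) : EReal :=
  ENNReal.log (∫⁻ ω, ENNReal.ofReal (Real.exp (l * X 0 ω)) ∂μ)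

theorem chebychev_lower_bound {Ω : Type*} [MeasurableSpace Ω] (μ : Measure Ω) [IsProbabilityMeasure μ]
    (X : ℕ → Ω → ℝ) (hmeas : ∀ i, Measurable (X i))
    (hindep : iIndepFun X μ)
    (hident : ∀ i, IdentDistrib (X i) (X 0) μ μ)
    (l : ℝ) (hl : 0 ≤ l) (u : ℝ) (n : ℕ) (hn : 1 ≤ n) :
    ((l * u : ℝ) : EReal) + (((n : ℝ)⁻¹ : ℝ) : EReal) *
        ENNReal.log (μ {ω | u ≤ empMean X n ω}) ≤ pressure μ X l := by
  classical
  have hg_meas : Measurable (fun x : ℝ => ENNReal.ofReal (Real.exp (l * x))) :=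
    ((measurable_const.mul measurable_id).exp).ennreal_ofReal
  set g : ℝ → ENNReal := fun x => ENNReal.ofReal (Real.exp (l * x)) with hgdef
  set M : ENNReal := ∫⁻ ω, g (X 0 ω) ∂μ with hMdef
  -- each variable has the same exponential integral
  have hsame : ∀ i, (∫⁻ ω, g (X i ω) ∂μ) = M := fun i =>
    ((hident i).comp hg_meas).lintegral_eq
  -- product formula by independence
  have hprod : ∀ s : Finset ℕ, (∫⁻ ω, g (∑ i ∈ s, X i ω) ∂μ) = M ^ s.card := by
    intro s
    induction s using Finset.induction_on with
    | empty => simp [hgdef]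
    | @insert i s hi ih =>
        have hind : IndepFun (g ∘ X i) (g ∘ (∑ j ∈ s, X j)) μ :=
          ((hindep.indepFun_finsetSum_of_notMem hmeas hi).symm).comp hg_meas hg_meas
        have hsum_meas : Measurable (∑ j ∈ s, X j) := by
          have h : (∑ j ∈ s, X j) = fun a => ∑ j ∈ s, X j a := by
            funext a; simp [Finset.sum_apply]
          rw [h]; exact Finset.measurable_sum s fun j _ => hmeas j
        have hmul := lintegral_mul_eq_lintegral_mul_lintegral_of_indepFun
          (hg_meas.comp (hmeas i))
          (hg_meas.comp hsum_meas) hind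
        have e1 : (∫⁻ ω, g (∑ j ∈ insert i s, X j ω) ∂μ)
            = ∫⁻ ω, ((g ∘ X i) * (g ∘ (∑ j ∈ s, X j))) ω ∂μ := by
          refine lintegral_congr fun ω => ?_
          simp only [Pi.mul_apply, Function.comp_apply, Finset.sum_insert hi, Finset.sum_apply,
            hgdef, mul_add, Real.exp_add, ENNReal.ofReal_mul (Real.exp_nonneg _)]
        have e2 : (∫⁻ ω, (g ∘ (∑ j ∈ s, X j)) ω ∂μ) = M ^ s.card := by
          rw [← ih]
          refine lintegral_congr fun ω => ?_
          simp [Finset.sum_apply]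
        have e3 : (∫⁻ ω, (g ∘ X i) ω ∂μ) = M := hsame i
        rw [e1, hmul, e2, e3, Finset.card_insert_of_notMem hi, pow_succ, mul_comm]
  -- measurability of the event
  have hAmeas : MeasurableSet {ω | u ≤ empMean X n ω} := by
    have : Measurable (empMean X n) := by
      apply Measurable.div_const
      exact Finset.measurable_sum _ (fun j _ => hmeas j)
    exact measurableSet_le measurable_const this
  have hn0 : (0:ℝ) < n := by exact_mod_cast hn
  -- Chernoff bound
  have hA : μ {ω | u ≤ empMean X n ω} * ENNReal.ofReal (Real.exp ((n:ℝ) * (l * u))) ≤ M ^ n := by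
    have hpt : ∀ ω, Set.indicator {ω | u ≤ empMean X n ω}
        (fun _ => ENNReal.ofReal (Real.exp ((n:ℝ) * (l * u)))) ω
        ≤ g (∑ i ∈ Finset.range n, X i ω) := by
      intro ω
      by_cases hω : ω ∈ {ω | u ≤ empMean X n ω}
      · rw [Set.indicator_of_mem hω]
        simp only [hgdef]
        apply ENNReal.ofReal_le_ofReal
        apply Real.exp_le_exp.mpr
        have h1 : (n:ℝ) * u ≤ ∑ i ∈ Finset.range n, X i ω := by
          have := hω
          simp only [Set.mem_setOf_eq, empMean] at this
          rw [le_div_iff₀ hn0] at this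
          linarith
        calc (n:ℝ) * (l * u) = l * ((n:ℝ) * u) := by ring
          _ ≤ l * ∑ i ∈ Finset.range n, X i ω := mul_le_mul_of_nonneg_left h1 hl
      · rw [Set.indicator_of_notMem hω]
        exact zero_le
    calc μ {ω | u ≤ empMean X n ω} * ENNReal.ofReal (Real.exp ((n:ℝ) * (l * u)))
        = ∫⁻ ω, Set.indicator {ω | u ≤ empMean X n ω}
            (fun _ => ENNReal.ofReal (Real.exp ((n:ℝ) * (l * u)))) ω ∂μ := by
          rw [lintegral_indicator_const hAmeas, mul_comm]
      _ ≤ ∫⁻ ω, g (∑ i ∈ Finset.range n, X i ω) ∂μ := lintegral_mono hpt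
      _ = M ^ n := by rw [hprod (Finset.range n), Finset.card_range]
  -- now the EReal manipulations
  show _ ≤ ENNReal.log M
  by_cases hz : μ {ω | u ≤ empMean X n ω} = 0
  · rw [hz, ENNReal.log_zero, EReal.coe_mul_bot_of_pos (by positivity), EReal.add_bot]
    exact bot_le
  by_cases hMtop : M = ⊤
  · rw [hMtop, ENNReal.log_top]
    exact le_top
  -- M ≠ 0
  have hM0 : M ≠ 0 := by
    intro h0
    rw [h0, zero_pow (by omega)] at hA
    have := le_antisymm hA zero_le
    rcases mul_eq_zero.mp this with h | h
    · exact hz h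
    · exact absurd h (by positivity)
  have hAtop : μ {ω | u ≤ empMean X n ω} ≠ ⊤ := measure_ne_top μ _
  -- pass to reals
  have hAr : (μ {ω | u ≤ empMean X n ω}).toReal * Real.exp ((n:ℝ) * (l * u))
      ≤ M.toReal ^ n := by
    have := ENNReal.toReal_mono (ENNReal.pow_ne_top hMtop) hA
    rwa [ENNReal.toReal_mul, ENNReal.toReal_ofReal (Real.exp_nonneg _),
      ENNReal.toReal_pow] at this
  have hApos : 0 < (μ {ω | u ≤ empMean X n ω}).toReal :=
    ENNReal.toReal_pos hz hAtop
  have hlog : Real.log ((μ {ω | u ≤ empMean X n ω}).toReal) + (n:ℝ) * (l * u)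
      ≤ (n:ℝ) * Real.log M.toReal := by
    have h1 := Real.log_le_log (by positivity) hAr
    rwa [Real.log_mul hApos.ne' (Real.exp_pos _).ne', Real.log_exp,
      Real.log_pow] at h1
  set a : ℝ := Real.log ((μ {ω | u ≤ empMean X n ω}).toReal)
  set b : ℝ := Real.log M.toReal
  have key : l * u + (n:ℝ)⁻¹ * a ≤ b := by
    have h3 : (n:ℝ)⁻¹ * (a + (n:ℝ) * (l * u)) ≤ (n:ℝ)⁻¹ * ((n:ℝ) * b) :=
      mul_le_mul_of_nonneg_left hlog (by positivity)
    have h4 : (n:ℝ)⁻¹ * ((n:ℝ) * b) = b := by field_simp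
    have h5 : (n:ℝ)⁻¹ * (a + (n:ℝ) * (l * u)) = (n:ℝ)⁻¹ * a + l * u := by
      field_simp
    rw [h4, h5] at h3
    linarith
  rw [ENNReal.log_pos_real hz hAtop, ENNReal.log_pos_real hM0 hMtop]
  exact_mod_cast key
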